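/- Let H be an n×n complex Hermitian matrix with eigenvalues λ_1 ≤ ... ≤ λ_n and orthonormal eigenvectors v_1,...,v_n, let u_0 ∈ ℂ^n, t ≥ 0, and let w(t,p) = Σ_{k=1}^n e^{-|p-λ_k t|} ⟨v_k, u_0⟩ v_k. Then for every real p with p > max(λ_n t, 0), one has e^p · ∫_p^∞ w(t,q) dq = exp(tH) u_0. -/

import Mathlib

open scoped BigOperators ComplexConjugate
open MeasureTheory
open scoped Matrix

lemma schrod_aux_integrable (p c : ℝ) :
    IntegrableOn (fun q : ℝ => (Real.exp (-|q - c|) : ℂ)) (Set.Ioi p) := by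
  have h1 : IntegrableOn (fun q : ℝ => Real.exp (-|q - c|)) (Set.Ioi p) := by
    have hbase : IntegrableOn (fun q : ℝ => Real.exp c * Real.exp (-(1:ℝ) * q))
        (Set.Ioi p) := (exp_neg_integrableOn_Ioi p one_pos).const_mul _
    refine MeasureTheory.Integrable.mono hbase ?_ ?_
    · exact (Real.continuous_exp.comp (continuous_abs.comp
        (continuous_id.sub continuous_const)).neg).aestronglyMeasurable.restrict
    · filter_upwards with q
      have h2 : q - c ≤ |q - c| := le_abs_self _
      have h3 : Real.exp (-|q - c|) ≤ Real.exp (c + -1 * q) :=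
        Real.exp_le_exp.mpr (by linarith)
      simpa [Real.abs_exp, ← Real.exp_add] using h3
  exact h1.ofReal

lemma schrod_aux_integral (p c : ℝ) (hc : c < p) :
    (∫ q in Set.Ioi p, (Real.exp (-|q - c|) : ℂ)) = (Real.exp (c - p) : ℂ) := by
  have hcongr : ∀ q ∈ Set.Ioi p, (Real.exp (-|q - c|) : ℂ)
      = ((fun q : ℝ => (Real.exp (c - q) : ℂ)) q) := by
    intro q hq
    have hq' : c < q := lt_trans hc hq
    rw [abs_of_pos (by linarith : (0:ℝ) < q - c)]
    norm_num
  rw [setIntegral_congr_fun measurableSet_Ioi hcongr]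
  have : (∫ q in Set.Ioi p, Real.exp (c - q)) = Real.exp (c - p) := by
    have : ∀ q : ℝ, Real.exp (c - q) = Real.exp c * Real.exp (-q) := by
      intro q; rw [← Real.exp_add]; ring_nf
    simp_rw [this]
    rw [MeasureTheory.integral_const_mul, integral_exp_neg_Ioi, ← Real.exp_add]
  rw [← this]
  exact integral_ofReal

/-- Recovery of `exp(tH) u₀` from the Schrödingerised solution
`w(t,p) = ∑ₖ e^{-|p-λₖt|} ⟨vₖ,u₀⟩ vₖ` by integration over `(p, ∞)` for any
`p > max(λₙ t, 0)`. -/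
theorem schrodingerisation_integral_recovery
    (n : ℕ) (H : Matrix (Fin (n + 1)) (Fin (n + 1)) ℂ) (hH : H.IsHermitian)
    (lam : Fin (n + 1) → ℝ) (hmono : Monotone lam)
    (v : Fin (n + 1) → (Fin (n + 1) → ℂ))
    (hortho : ∀ j k, (∑ i, conj (v j i) * v k i) = if j = k then 1 else 0)
    (heig : ∀ k, H.mulVec (v k) = (lam k : ℂ) • v k)
    (u0 : Fin (n + 1) → ℂ) (t : ℝ) (ht : 0 ≤ t)
    (w : ℝ → ℝ → (Fin (n + 1) → ℂ))
    (hw : ∀ τ p, w τ p =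
      ∑ k, (Real.exp (-|p - lam k * τ|) : ℂ) • (∑ i, conj (v k i) * u0 i) • v k)
    (p : ℝ) (hp : p > max (lam (Fin.last n) * t) 0) :
    (Real.exp p : ℂ) • (∫ q in Set.Ioi p, w t q) =
      (NormedSpace.exp ((t : ℂ) • H)).mulVec u0 := by
  have hlt : ∀ k, lam k * t < p := fun k =>
    lt_of_le_of_lt (mul_le_mul_of_nonneg_right (hmono (Fin.le_last k)) ht)
      (lt_of_le_of_lt (le_max_left _ _) hp)
  set c : Fin (n + 1) → ℂ := fun k => ∑ i, conj (v k i) * u0 i with hc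
  -- ### Integral side
  have hint : (∫ q in Set.Ioi p, w t q)
      = ∑ k, (Real.exp (lam k * t - p) : ℂ) • c k • v k := by
    have hwfun : (fun q => w t q) = fun q =>
        ∑ k, (Real.exp (-|q - lam k * t|) : ℂ) • c k • v k := by
      funext q; rw [hw]
    rw [hwfun]
    rw [integral_finset_sum]
    · refine Finset.sum_congr rfl fun k _ => ?_
      rw [integral_smul_const, schrod_aux_integral p (lam k * t) (hlt k)]
    · intro k _
      exact (schrod_aux_integrable p (lam k * t)).smul_const _
  -- ### Spectral side
  set M : Matrix (Fin (n + 1)) (Fin (n + 1)) ℂ := Matrix.of fun i k => v k i with hM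
  have hM1 : Mᴴ * M = 1 := by
    ext j k
    simp only [Matrix.mul_apply, Matrix.conjTranspose_apply, hM, Matrix.of_apply,
      Matrix.one_apply, Complex.star_def]
    exact hortho j k
  have hM2 : M * Mᴴ = 1 := mul_eq_one_comm.mp hM1
  set U : (Matrix (Fin (n + 1)) (Fin (n + 1)) ℂ)ˣ := ⟨M, Mᴴ, hM2, hM1⟩ with hU
  have hHM : H * M = M * Matrix.diagonal (fun k => (lam k : ℂ)) := by
    ext i k
    have := congrFun (heig k) i
    simp only [Matrix.mulVec, dotProduct, Pi.smul_apply, smul_eq_mul] at this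
    simp only [Matrix.mul_apply, Matrix.diagonal_apply, hM, Matrix.of_apply, mul_ite, mul_zero]
    rw [Finset.sum_ite_eq' Finset.univ k (fun x => v x i * (lam x : ℂ))]
    simp only [Finset.mem_univ, if_true]
    exact this.trans (mul_comm _ _)
  have hHD : (t : ℂ) • H = (↑U : Matrix (Fin (n + 1)) (Fin (n + 1)) ℂ) * Matrix.diagonal (fun k => ((t * lam k : ℝ) : ℂ)) * (↑U⁻¹ : Matrix (Fin (n + 1)) (Fin (n + 1)) ℂ) := by
    have hH' : H = M * Matrix.diagonal (fun k => (lam k : ℂ)) * Mᴴ := by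
      calc H = H * (M * Mᴴ) := by rw [hM2, mul_one]
        _ = (H * M) * Mᴴ := by rw [mul_assoc]
        _ = M * Matrix.diagonal (fun k => (lam k : ℂ)) * Mᴴ := by rw [hHM]
    have hU1 : (↑U : Matrix (Fin (n + 1)) (Fin (n + 1)) ℂ) = M := rfl
    have hU2 : (↑U⁻¹ : Matrix (Fin (n + 1)) (Fin (n + 1)) ℂ) = Mᴴ := rfl
    rw [hU1, hU2, hH']
    rw [← Matrix.smul_mul, ← Matrix.mul_smul]
    congr 2
    ext a b
    simp only [Matrix.smul_apply, Matrix.diagonal_apply, smul_eq_mul]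
    by_cases hab : a = b
    · simp only [hab, if_true]
      push_cast
      ring
    · simp [hab]
  have hexp : NormedSpace.exp ((t : ℂ) • H)
      = M * Matrix.diagonal (fun k => (Real.exp (t * lam k) : ℂ)) * Mᴴ := by
    rw [hHD, Matrix.exp_units_conj, Matrix.exp_diagonal]
    have : NormedSpace.exp (fun k => ((t * lam k : ℝ) : ℂ))
        = fun k => (Real.exp (t * lam k) : ℂ) := by
      rw [Pi.exp_def]
      funext k
      rw [← Complex.exp_eq_exp_ℂ, ← Complex.ofReal_exp]
    rw [this]; rfl
  rw [hint, hexp]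
  have hMD : ∀ i k', (M * Matrix.diagonal (fun k => (Real.exp (t * lam k) : ℂ))) i k'
      = v k' i * (Real.exp (t * lam k') : ℂ) := by
    intro i k'
    simp only [Matrix.mul_apply, Matrix.diagonal_apply, mul_ite, mul_zero]
    rw [Finset.sum_ite_eq' Finset.univ k' (fun l => M i l * (Real.exp (t * lam l) : ℂ))]
    simp [hM]
  funext i
  simp only [Matrix.mulVec, dotProduct, Finset.sum_apply, Pi.smul_apply, smul_eq_mul,
    Matrix.mul_apply, hMD, Matrix.conjTranspose_apply, hM, Matrix.of_apply]
  rw [Finset.mul_sum]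
  simp_rw [Finset.sum_mul]
  rw [Finset.sum_comm]
  refine Finset.sum_congr rfl fun k _ => ?_
  have harg : p + (lam k * t - p) = t * lam k := by ring
  have hek : (Real.exp p : ℂ) * ((Real.exp (lam k * t - p) : ℂ) * (c k * v k i))
      = (Real.exp (t * lam k) : ℂ) * (c k * v k i) := by
    rw [← mul_assoc, ← Complex.ofReal_mul, ← Real.exp_add, harg]
  rw [hek]
  simp only [hc, Finset.sum_mul, Finset.mul_sum]
  refine Finset.sum_congr rfl fun j _ => ?_
  simp only [starRingEnd_apply, Matrix.diagonal_apply, mul_ite, mul_zero, Finset.sum_ite_eq',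
    Finset.mem_univ, if_true]
  rw [Finset.sum_eq_single k (fun b _ hb => by simp [hb]) (by simp), if_pos rfl]
  ring
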